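/- Let Q be a p-primary ideal of length ℓ (there is a maximal chain Q = Q_1 ⊂ ··· ⊂ Q_ℓ = p of primary ideals), and let r be the least positive integer a with p^a ⊆ Q. Then r ≤ ℓ. -/

import Mathlib

/-- Let `Q` be a `p`-primary ideal of length `ℓ` in a Noetherian commutative ring: there is
a chain `Q = Q_1 ⊂ ⋯ ⊂ Q_ℓ = p` of `p`-primary ideals and no longer such chain.  If `r` is
the least positive integer `a` with `p^a ⊆ Q`, then `r ≤ ℓ`. -/
theorem primary_power_le_length {P : Type*} [CommRing P] [IsNoetherianRing P]
    (p Q : Ideal P) (hp : p.IsPrime) (hQ : Q.IsPrimary) (hrad : Q.radical = p)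
    (ℓ : ℕ) (hℓ : 0 < ℓ)
    (hchain : ∃ c : Fin ℓ → Ideal P, StrictMono c ∧
      c ⟨0, hℓ⟩ = Q ∧ c ⟨ℓ - 1, by omega⟩ = p ∧
      ∀ i, (c i).IsPrimary ∧ (c i).radical = p)
    (hmax : ¬ ∃ c : Fin (ℓ + 1) → Ideal P, StrictMono c ∧
      c ⟨0, by omega⟩ = Q ∧ c ⟨ℓ, by omega⟩ = p ∧
      ∀ i, (c i).IsPrimary ∧ (c i).radical = p) :
    sInf {a : ℕ | 0 < a ∧ p ^ a ≤ Q} ≤ ℓ := by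
  haveI := hp
  suffices h : p ^ ℓ ≤ Q by exact Nat.sInf_le ⟨hℓ, h⟩
  by_contra hcon
  apply hmax
  set S := Localization.AtPrime p with hS
  haveI : IsNoetherianRing S :=
    IsLocalization.isNoetherianRing p.primeCompl S inferInstance
  set f : P →+* S := algebraMap P S with hf
  set M : Ideal S := IsLocalRing.maximalIdeal S with hM
  have hMap : Ideal.map f p = M := Localization.AtPrime.map_eq_maximalIdeal
  have hcomM : Ideal.comap f M = p := Localization.AtPrime.comap_maximalIdeal
  have hQp : Q ≤ p := hrad ▸ Ideal.le_radical
  have hQeM : Ideal.map f Q ≤ M := hMap ▸ Ideal.map_mono hQp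
  -- contraction of the extension of Q is Q (Q is primary)
  have hQec : Ideal.comap f (Ideal.map f Q) = Q := by
    refine le_antisymm (fun a ha => ?_) Ideal.le_comap_map
    obtain ⟨⟨b, s⟩, h⟩ :=
      (IsLocalization.mem_map_algebraMap_iff p.primeCompl S).1 (Ideal.mem_comap.1 ha)
    replace h : algebraMap P S (s * a) = algebraMap P S b := by
      simpa only [hf, ← map_mul, mul_comm] using h
    obtain ⟨c, hc⟩ := (IsLocalization.eq_iff_exists p.primeCompl S).1 h
    have hmem : a * (↑c * ↑s) ∈ Q := by
      have : ↑c * ↑s * a ∈ Q := by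
        rw [mul_assoc, hc]; exact Q.mul_mem_left c b.2
      rwa [mul_comm] at this
    rcases (Ideal.isPrimary_iff.mp hQ).2 hmem with h1 | h2
    · exact h1
    · exact absurd (hrad ▸ h2) (c * s).2
  -- key: no small power of M is inside Q^e
  have keyA : ∀ k : ℕ, 0 < k → k ≤ ℓ → ¬ M ^ k ≤ Ideal.map f Q := by
    intro k hk hkl hle
    apply hcon
    have h1 : p ^ k ≤ Ideal.comap f (M ^ k) := by
      rw [← hMap, ← Ideal.map_pow]
      exact Ideal.le_comap_map
    have h2 : p ^ k ≤ Q := le_trans h1 (le_trans (Ideal.comap_mono hle) (le_of_eq hQec))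
    exact le_trans (Ideal.pow_le_pow_right hkl) h2
  -- Nakayama
  have keyB : ∀ k : ℕ, M ^ k ≤ Ideal.map f Q ⊔ M ^ (k + 1) → M ^ k ≤ Ideal.map f Q := by
    intro k hle
    have hfg : (M ^ k).FG := IsNoetherian.noetherian _
    have hjac : M ≤ Ideal.jacobson ⊥ := IsLocalRing.maximalIdeal_le_jacobson ⊥
    have h := Submodule.sup_eq_sup_smul_of_le_smul_of_le_jacobson
      (N := Ideal.map f Q) (N' := M ^ k) (I := M) (J := ⊥) hfg hjac ?_
    · have h' : Ideal.map f Q ⊔ M ^ k = Ideal.map f Q := by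
        rw [h, Submodule.bot_smul, sup_bot_eq]
      exact le_sup_right.trans h'.le
    · rwa [Ideal.smul_eq_mul, mul_comm, ← pow_succ]
  -- the chain in S
  set J : ℕ → Ideal S := fun k => Ideal.map f Q ⊔ M ^ k with hJ
  -- each J k (k ≥ 1) has radical M
  have hMprime : M.IsPrime := (IsLocalRing.maximalIdeal.isMaximal S).isPrime
  have hradJ : ∀ k : ℕ, 0 < k → (J k).radical = M := by
    intro k hk
    refine le_antisymm ?_ ?_
    · exact (Ideal.radical_mono (sup_le hQeM (Ideal.pow_le_self hk.ne'))).trans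
        (le_of_eq hMprime.radical)
    · have h2 : (M ^ k).radical = M := by
        rw [Ideal.radical_pow M hk.ne']; exact hMprime.radical
      exact (le_of_eq h2.symm).trans (Ideal.radical_mono le_sup_right)
  have hJprim : ∀ k : ℕ, 0 < k → (J k).IsPrimary := by
    intro k hk
    exact Ideal.isPrimary_of_isMaximal_radical
      (by rw [hradJ k hk]; exact IsLocalRing.maximalIdeal.isMaximal S)
  -- comap of primary is primary
  have hcomapPrim : ∀ (I : Ideal S), I.IsPrimary → (Ideal.comap f I).IsPrimary := by
    intro I hI
    rw [Ideal.isPrimary_iff] at hI ⊢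
    constructor
    · intro htop
      apply hI.1
      rw [Ideal.eq_top_iff_one] at htop ⊢
      simpa using htop
    · intro x y hxy
      have hfx : f x * f y ∈ I := by simpa [map_mul] using hxy
      rcases hI.2 hfx with h | h
      · exact Or.inl h
      · exact Or.inr (by rw [← Ideal.comap_radical]; exact h)
  -- comap strict mono on ideals of S
  have hcomapLT : ∀ (I I' : Ideal S), I < I' → Ideal.comap f I < Ideal.comap f I' := by
    intro I I' hlt
    refine lt_of_le_of_ne (Ideal.comap_mono hlt.le) (fun heq => hlt.ne ?_)
    rw [← IsLocalization.map_comap p.primeCompl S I, ← IsLocalization.map_comap p.primeCompl S I']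
    exact congrArg (Ideal.map (algebraMap P S)) heq
  -- strict inclusions J (k+1) < J k for 1 ≤ k ≤ ℓ - 1
  have hJlt : ∀ k : ℕ, 0 < k → k < ℓ → J (k + 1) < J k := by
    intro k hk hkl
    refine lt_of_le_of_ne (sup_le_sup_left (Ideal.pow_le_pow_right (Nat.le_succ k)) _)
      (fun heq => ?_)
    have h5 : M ^ k ≤ J (k + 1) := by rw [heq]; exact le_sup_right
    exact keyA k hk hkl.le (keyB k h5)
  -- the first step : map Q < J ℓ
  have hstep0 : Ideal.map f Q < J ℓ := by
    refine lt_of_le_of_ne le_sup_left (fun heq => ?_)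
    have h5 : M ^ ℓ ≤ Ideal.map f Q := by rw [heq]; exact le_sup_right
    exact keyA ℓ hℓ le_rfl h5
  -- the chain in S, all entries at once
  set JJ : ℕ → Ideal S := fun n => match n with
    | 0 => Ideal.map f Q
    | (n + 1) => J (ℓ - n) with hJJ
  have hJJsucc : ∀ n : ℕ, JJ (n + 1) = J (ℓ - n) := fun n => rfl
  have hJJstep : ∀ n : ℕ, n + 1 ≤ ℓ → JJ n < JJ (n + 1) := by
    intro n hn
    match n with
    | 0 =>
      rw [hJJsucc]
      have h3 : ℓ - 0 = ℓ := by omega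
      rw [h3]
      exact hstep0
    | (m + 1) =>
      rw [hJJsucc, hJJsucc]
      have h3 : ℓ - m = (ℓ - (m + 1)) + 1 := by omega
      rw [h3]
      exact hJlt (ℓ - (m + 1)) (by omega) (by omega)
  refine ⟨fun i => Ideal.comap f (JJ i.val), ?_, ?_, ?_, ?_⟩
  · refine Fin.strictMono_iff_lt_succ.2 (fun i => ?_)
    show Ideal.comap f (JJ i.val) < Ideal.comap f (JJ (i.val + 1))
    exact hcomapLT _ _ (hJJstep i.val i.isLt)
  · show Ideal.comap f (JJ 0) = Q
    exact hQec
  · show Ideal.comap f (JJ ℓ) = p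
    have hE : JJ ℓ = M := by
      have h3 : ℓ = (ℓ - 1) + 1 := by omega
      rw [h3, hJJsucc]
      have h4 : ℓ - (ℓ - 1) = 1 := by omega
      rw [h4]
      rw [hJ]
      simp only [pow_one]
      exact sup_eq_right.2 hQeM
    rw [hE, hcomM]
  · intro i
    show (Ideal.comap f (JJ i.val)).IsPrimary ∧ (Ideal.comap f (JJ i.val)).radical = p
    match hv : i.val with
    | 0 =>
      rw [show JJ 0 = Ideal.map f Q from rfl, hQec]
      exact ⟨hQ, hrad⟩
    | (n + 1) =>
      have hn : n + 1 ≤ ℓ := by have := i.isLt; omega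
      rw [hJJsucc]
      have hk : 0 < ℓ - n := by omega
      exact ⟨hcomapPrim _ (hJprim _ hk),
        by rw [← Ideal.comap_radical, hradJ _ hk, hcomM]⟩
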